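/- Let ρ̄ : G → GL_2(𝔽) be an absolutely irreducible representation of a group G over a field 𝔽 of characteristic 2 with dihedral image, and let L correspond to the unique index-2 subgroup H = G_L of G such that ρ̄|_H is abelian. Let A be a complete local domain of characteristic 2 and ρ : G → GL_2(A) a deformation of ρ̄ with finite-order determinant that is non-dihedral (not induced from any index-2 subgroup after extension to the fraction field). Then there exists σ ∈ G \ H such that ρ(σ) has infinite order. -/

import Mathlib

set_option synthInstance.maxHeartbeats 1000000
set_option maxHeartbeats 1000000

section Auxiliary

/-- Cayley-Hamilton for 2x2 matrices. -/
lemma statement17.ch2 {R : Type*} [CommRing R] (M : Matrix (Fin 2) (Fin 2) R) :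
    M * M = M.trace • M - M.det • (1 : Matrix (Fin 2) (Fin 2) R) := by
  ext i j
  fin_cases i <;> fin_cases j <;>
    simp [Matrix.mul_apply, Fin.sum_univ_two, Matrix.trace_fin_two, Matrix.det_fin_two,
      Matrix.one_apply] <;> ring

/-- Chebyshev-like sequence: coefficients of powers of a quadratic element. -/
def statement17.cheb {R : Type*} [CommRing R] (t d : R) : ℕ → R × R
  | 0 => (0, 1)
  | n + 1 => (t * (statement17.cheb t d n).1 + (statement17.cheb t d n).2,
      -d * (statement17.cheb t d n).1)

lemma statement17.cheb_pow {R : Type*} [CommRing R] {S : Type*} [Ring S] [Algebra R S]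
    (t d : R) (x : S) (hx : x * x = t • x - d • 1) (n : ℕ) :
    x ^ n = (statement17.cheb t d n).1 • x + (statement17.cheb t d n).2 • (1 : S) := by
  induction n with
  | zero => simp [statement17.cheb]
  | succ n ih =>
      rw [pow_succ, ih, add_mul, smul_mul_assoc, smul_mul_assoc, hx, one_mul, statement17.cheb]
      simp only [smul_sub, smul_smul]
      module

lemma statement17.cheb_map {R : Type*} [CommRing R] {S : Type*} [CommRing S] (f : R →+* S)
    (t d : R) (n : ℕ) :
    statement17.cheb (f t) (f d) n
      = (f (statement17.cheb t d n).1, f (statement17.cheb t d n).2) := by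
  induction n with
  | zero => simp [statement17.cheb]
  | succ n ih => simp [statement17.cheb, ih]

lemma statement17.pow2_eq_one {K : Type*} [Field K] [CharP K 2] (x : K) (n : ℕ)
    (h : x ^ 2 ^ n = 1) : x = 1 := by
  have h2 : (x - 1) ^ 2 ^ n = 0 := by
    rw [sub_pow_char_pow, h, one_pow, sub_self]
  have := pow_eq_zero_iff (n := 2 ^ n) (by positivity) |>.1 h2
  exact sub_eq_zero.1 this

/-- The trace of a finite-order invertible 2x2 matrix over a characteristic-2 local domain
is zero as soon as it lies in the maximal ideal. -/
lemma statement17.traceZero {A : Type*} [CommRing A] [IsDomain A] [IsLocalRing A] [CharP A 2]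
    (M : (Matrix (Fin 2) (Fin 2) A)ˣ) (k : ℕ) (hk : 0 < k) (hMk : M ^ k = 1)
    (ht : (M : Matrix (Fin 2) (Fin 2) A).trace ∈ IsLocalRing.maximalIdeal A) :
    (M : Matrix (Fin 2) (Fin 2) A).trace = 0 := by
  set m : Matrix (Fin 2) (Fin 2) A := (M : Matrix (Fin 2) (Fin 2) A) with hm
  set t := m.trace with htdef
  set δ := m.det with hδdef
  have hch : m * m = t • m - δ • 1 := statement17.ch2 m
  have hmk : m ^ k = 1 := by
    rw [hm, ← Units.val_pow_eq_pow_val, hMk, Units.val_one]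
  have hpow := statement17.cheb_pow t δ m hch k
  set a := (statement17.cheb t δ k).1 with hadef
  set b := (statement17.cheb t δ k).2 with hbdef
  rw [hmk] at hpow
  by_cases ha : a = 0
  · -- nondegenerate case: pass to eigenvalues over the algebraic closure
    have hb : b = 1 := by
      have := congrFun (congrFun hpow 0) 0
      simpa [ha, Matrix.one_apply] using this.symm
    set K := AlgebraicClosure (FractionRing A)
    haveI : CharP (FractionRing A) 2 :=
      charP_of_injective_algebraMap (IsFractionRing.injective A (FractionRing A)) 2
    haveI : CharP K 2 :=
      charP_of_injective_algebraMap (algebraMap (FractionRing A) K).injective 2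
    set φ : A →+* K := algebraMap A K with hφdef
    have hφinj : Function.Injective φ := by
      rw [hφdef, IsScalarTower.algebraMap_eq A (FractionRing A) K]
      exact (algebraMap (FractionRing A) K).injective.comp (IsFractionRing.injective A _)
    obtain ⟨lam, hlam⟩ : ∃ z : K, z ^ 2 - φ t * z + φ δ = 0 := by
      obtain ⟨z, hz⟩ := IsAlgClosed.exists_root
        (Polynomial.C 1 * Polynomial.X ^ 2 + Polynomial.C (-(φ t)) * Polynomial.X +
          Polynomial.C (φ δ))
        (by rw [Polynomial.degree_quadratic (one_ne_zero)]; decide)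
      refine ⟨z, ?_⟩
      have h := hz
      simp [Polynomial.IsRoot] at h
      linear_combination h
    set μ := φ t - lam with hμdef
    have hμ : μ ^ 2 - φ t * μ + φ δ = 0 := by rw [hμdef]; linear_combination hlam
    -- powers of lam and mu
    have hlamk : lam ^ k = 1 := by
      have hx : lam * lam = (φ t) • lam - (φ δ) • (1 : K) := by
        simp only [smul_eq_mul, mul_one]
        linear_combination hlam
      have := statement17.cheb_pow (φ t) (φ δ) lam hx k
      rw [statement17.cheb_map φ t δ k] at this
      simp only [← hadef, ← hbdef, ha, hb, map_zero, map_one, zero_smul, one_smul,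
        smul_eq_mul, zero_mul, zero_add] at this
      simpa using this
    have hμk : μ ^ k = 1 := by
      have hx : μ * μ = (φ t) • μ - (φ δ) • (1 : K) := by
        simp only [smul_eq_mul, mul_one]
        linear_combination hμ
      have := statement17.cheb_pow (φ t) (φ δ) μ hx k
      rw [statement17.cheb_map φ t δ k] at this
      simp only [← hadef, ← hbdef, ha, hb, map_zero, map_one, zero_smul, one_smul,
        smul_eq_mul, zero_mul, zero_add] at this
      simpa using this
    -- odd part of k
    set mm := k / 2 ^ (k.factorization 2) with hmmdef
    have hmmk : 2 ^ (k.factorization 2) * mm = k := Nat.ordProj_mul_ordCompl_eq_self k 2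
    have hmmpos : 0 < mm := Nat.ordCompl_pos 2 hk.ne'
    have hmmodd : ¬ 2 ∣ mm := Nat.not_dvd_ordCompl Nat.prime_two hk.ne'
    have hlmm : lam ^ mm = 1 := by
      apply statement17.pow2_eq_one (lam ^ mm) (k.factorization 2)
      rw [← pow_mul, mul_comm, hmmk, hlamk]
    have hμmm : μ ^ mm = 1 := by
      apply statement17.pow2_eq_one (μ ^ mm) (k.factorization 2)
      rw [← pow_mul, mul_comm, hmmk, hμk]
    -- order of 2 modulo mm
    have hcop : Nat.Coprime 2 mm := (Nat.Prime.coprime_iff_not_dvd Nat.prime_two).2 hmmodd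
    haveI : NeZero mm := ⟨hmmpos.ne'⟩
    set u : (ZMod mm)ˣ := ZMod.unitOfCoprime 2 hcop with hudef
    set e := orderOf u with hedef
    have he1 : 1 ≤ e := orderOf_pos u
    have hue : u ^ e = 1 := pow_orderOf_eq_one u
    have hmod : (2 ^ e : ℕ) ≡ 1 [MOD mm] := by
      have : ((2 ^ e : ℕ) : ZMod mm) = ((1 : ℕ) : ZMod mm) := by
        have := congrArg (Units.val) hue
        push_cast at this ⊢
        simpa [hudef] using this
      exact (ZMod.natCast_eq_natCast_iff _ _ _).1 this
    obtain ⟨c, hc⟩ : ∃ c, 2 ^ e = mm * c + 1 := by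
      have h1le : 1 ≤ 2 ^ e := Nat.one_le_two_pow
      obtain ⟨c, hc⟩ := (Nat.modEq_iff_dvd' h1le).1 hmod.symm
      exact ⟨c, by omega⟩
    have hfrob : ∀ z : K, z ^ mm = 1 → z ^ 2 ^ e = z := by
      intro z hz
      rw [hc, pow_succ, pow_mul, hz, one_pow, one_mul]
    -- t ^ (2 ^ e) = t
    have hteq : t ^ 2 ^ e = t := by
      apply hφinj
      have hsum : φ t = lam + μ := by rw [hμdef]; ring
      rw [map_pow, hsum, add_pow_char_pow, hfrob lam hlmm, hfrob μ hμmm]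
    -- conclude t = 0 using t ∈ maximal ideal
    have hfac : t * (t ^ (2 ^ e - 1) - 1) = 0 := by
      have h2e : 2 ^ e - 1 + 1 = 2 ^ e := by
        have : 1 ≤ 2 ^ e := Nat.one_le_two_pow
        omega
      calc t * (t ^ (2 ^ e - 1) - 1) = t ^ (2 ^ e - 1 + 1) - t := by ring
        _ = 0 := by rw [h2e, hteq, sub_self]
    have hmem : t ^ (2 ^ e - 1) ∈ IsLocalRing.maximalIdeal A := by
      apply Ideal.pow_mem_of_mem _ ht
      have : 2 ≤ 2 ^ e := by
        calc 2 = 2 ^ 1 := (pow_one 2).symm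
        _ ≤ 2 ^ e := Nat.pow_le_pow_right (by norm_num) he1
      omega
    have hunit : IsUnit (t ^ (2 ^ e - 1) - 1) := by
      have := IsLocalRing.isUnit_one_sub_self_of_mem_nonunits _
        ((IsLocalRing.mem_maximalIdeal _).1 hmem)
      simpa using this.neg
    rcases mul_eq_zero.1 hfac with h | h
    · exact h
    · exact absurd (h ▸ hunit) (by simp)
  · -- degenerate case: M is scalar, so trace = 2 * M00 = 0 in char 2
    have h00 := congrFun (congrFun hpow 0) 0
    have h11 := congrFun (congrFun hpow 1) 1
    simp [Matrix.one_apply] at h00 h11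
    have : a * (m 0 0 - m 1 1) = 0 := by linear_combination h11 - h00
    have hdiag : m 0 0 = m 1 1 := by
      rcases mul_eq_zero.1 this with h | h
      · exact absurd h ha
      · exact sub_eq_zero.1 h
    rw [htdef, Matrix.trace_fin_two, hdiag, CharTwo.add_self_eq_zero]

/-- Two vectors killed by the same nonzero singular 2x2 matrix are proportional. -/
lemma statement17.kernelLine {F : Type*} [Field F] {B : Matrix (Fin 2) (Fin 2) F}
    (hB : B ≠ 0) {v u : Fin 2 → F} (hv : B.mulVec v = 0) (hu : B.mulVec u = 0)
    (hv0 : v ≠ 0) : ∃ c : F, u = c • v := by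
  obtain ⟨r, s, hrs⟩ : ∃ r s, B r s ≠ 0 := by
    by_contra h; push_neg at h; exact hB (by ext i j; simpa using h i j)
  set p := B r 0 with hp
  set q := B r 1 with hq
  have hrowv : p * v 0 + q * v 1 = 0 := by
    have := congrFun hv r
    simpa [Matrix.mulVec, dotProduct, Fin.sum_univ_two] using this
  have hrowu : p * u 0 + q * u 1 = 0 := by
    have := congrFun hu r
    simpa [Matrix.mulVec, dotProduct, Fin.sum_univ_two] using this
  have hpq : p ≠ 0 ∨ q ≠ 0 := by
    fin_cases s <;> [exact Or.inl hrs; exact Or.inr hrs]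
  have hcross : u 0 * v 1 - u 1 * v 0 = 0 := by
    rcases hpq with h0 | h0
    · have : p * (u 0 * v 1 - u 1 * v 0) = 0 := by linear_combination v 1 * hrowu - u 1 * hrowv
      exact (mul_eq_zero.1 this).resolve_left h0
    · have : q * (u 0 * v 1 - u 1 * v 0) = 0 := by linear_combination u 0 * hrowv - v 0 * hrowu
      exact (mul_eq_zero.1 this).resolve_left h0
  have hv01 : v 0 ≠ 0 ∨ v 1 ≠ 0 := by
    by_contra h; push_neg at h
    exact hv0 (by ext i; fin_cases i <;> simp [h.1, h.2])
  rcases hv01 with h0 | h0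
  · refine ⟨u 0 / v 0, ?_⟩
    ext i; fin_cases i
    · simp [div_mul_cancel₀, h0]
    · show u 1 = (u 0 / v 0) * v 1
      rw [div_mul_eq_mul_div, eq_div_iff h0]
      linear_combination -hcross
  · refine ⟨u 1 / v 1, ?_⟩
    ext i; fin_cases i
    · show u 0 = (u 1 / v 1) * v 0
      rw [div_mul_eq_mul_div, eq_div_iff h0]
      linear_combination hcross
    · simp [div_mul_cancel₀, h0]

/-- A commuting set of 2x2 matrices over an algebraically closed field has a
common eigenvector. -/
lemma statement17.commEigen {F : Type*} [Field F] [IsAlgClosed F]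
    (S : Set (Matrix (Fin 2) (Fin 2) F))
    (hcomm : ∀ M ∈ S, ∀ N ∈ S, M * N = N * M) :
    ∃ v : Fin 2 → F, v ≠ 0 ∧ ∀ M ∈ S, ∃ c : F, M.mulVec v = c • v := by
  by_cases hsc : ∀ M ∈ S, M 0 1 = 0 ∧ M 1 0 = 0 ∧ M 0 0 = M 1 1
  · refine ⟨![1, 0], fun h => by simpa using congrFun h 0, fun M hM => ⟨M 0 0, ?_⟩⟩
    obtain ⟨h1, h2, _⟩ := hsc M hM
    ext i; fin_cases i <;>
      simp [Matrix.mulVec, dotProduct, Fin.sum_univ_two, h1, h2]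
  · push_neg at hsc
    obtain ⟨M₀, hM₀S, hns⟩ := hsc
    obtain ⟨c₀, hc₀⟩ : ∃ c : F, c ^ 2 - M₀.trace * c + M₀.det = 0 := by
      obtain ⟨z, hz⟩ := IsAlgClosed.exists_root
        (Polynomial.C 1 * Polynomial.X ^ 2 + Polynomial.C (-M₀.trace) * Polynomial.X +
          Polynomial.C M₀.det)
        (by rw [Polynomial.degree_quadratic (one_ne_zero)]; decide)
      refine ⟨z, ?_⟩
      have h := hz
      simp [Polynomial.IsRoot] at h
      linear_combination h
    set B := M₀ - c₀ • (1 : Matrix (Fin 2) (Fin 2) F) with hBdef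
    have hBdet : B.det = 0 := by
      rw [hBdef]
      simp [Matrix.det_fin_two, Matrix.trace_fin_two, Matrix.one_apply] at hc₀ ⊢
      linear_combination hc₀
    have hBne : B ≠ 0 := by
      intro h
      have h01 : M₀ 0 1 = 0 := by
        have := congrFun (congrFun h 0) 1; simpa [hBdef, Matrix.one_apply] using this
      have h10 : M₀ 1 0 = 0 := by
        have := congrFun (congrFun h 1) 0; simpa [hBdef, Matrix.one_apply] using this
      have h00 : M₀ 0 0 = c₀ := by
        have := congrFun (congrFun h 0) 0; simpa [hBdef, Matrix.one_apply, sub_eq_zero] using this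
      have h11 : M₀ 1 1 = c₀ := by
        have := congrFun (congrFun h 1) 1; simpa [hBdef, Matrix.one_apply, sub_eq_zero] using this
      exact hns h01 h10 (h00.trans h11.symm)
    obtain ⟨v, hv0, hv⟩ := (Matrix.exists_mulVec_eq_zero_iff).2 hBdet
    refine ⟨v, hv0, fun N hN => ?_⟩
    have hBN : B * N = N * B := by
      rw [hBdef]
      simp only [Matrix.sub_mul, Matrix.mul_sub, hcomm M₀ hM₀S N hN]
      congr 1
      rw [Matrix.smul_mul, Matrix.mul_smul, one_mul, mul_one]
    have hNu : B.mulVec (N.mulVec v) = 0 := by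
      rw [Matrix.mulVec_mulVec, hBN, ← Matrix.mulVec_mulVec, hv, Matrix.mulVec_zero]
    obtain ⟨c, hc⟩ := statement17.kernelLine hBne hv hNu hv0
    exact ⟨c, hc⟩

/-- The reduction of a mod-2 dihedral representation has trace zero outside
the index-two subgroup. -/
lemma statement17.traceBar {G : Type*} [Group G] {𝔽 : Type*} [Field 𝔽]
    (ρbar : G →* (Matrix (Fin 2) (Fin 2) 𝔽)ˣ)
    (hirr : ∀ v : Fin 2 → AlgebraicClosure 𝔽, v ≠ 0 →
      ¬ ∀ g : G, ∃ c : AlgebraicClosure 𝔽,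
        (((ρbar g : Matrix (Fin 2) (Fin 2) 𝔽)).map
            (algebraMap 𝔽 (AlgebraicClosure 𝔽))).mulVec v = c • v)
    (H : Subgroup G) (hHidx : H.index = 2)
    (hHab : ∀ g₁ ∈ H, ∀ g₂ ∈ H, ρbar g₁ * ρbar g₂ = ρbar g₂ * ρbar g₁)
    {σ : G} (hσ : σ ∉ H) :
    (ρbar σ : Matrix (Fin 2) (Fin 2) 𝔽).trace = 0 := by
  set Ω := AlgebraicClosure 𝔽
  set ψ : 𝔽 →+* Ω := algebraMap 𝔽 Ω with hψdef
  set N : G → Matrix (Fin 2) (Fin 2) Ω :=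
    fun g => ((ρbar g : Matrix (Fin 2) (Fin 2) 𝔽)).map ψ with hNdef
  have hNmul : ∀ g₁ g₂ : G, N (g₁ * g₂) = N g₁ * N g₂ := by
    intro g₁ g₂
    rw [hNdef]
    simp only [map_mul, Units.val_mul, Matrix.map_mul]
  set S : Set (Matrix (Fin 2) (Fin 2) Ω) := (fun h : H => N h) '' Set.univ with hSdef
  have hcomm : ∀ M ∈ S, ∀ M' ∈ S, M * M' = M' * M := by
    rintro _ ⟨h₁, -, rfl⟩ _ ⟨h₂, -, rfl⟩
    rw [← hNmul, ← hNmul]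
    have : ρbar (h₁ * h₂ : G) = ρbar (h₂ * h₁ : G) := by
      rw [map_mul, map_mul, hHab h₁ h₁.2 h₂ h₂.2]
    simp only [hNdef]
    rw [this]
  obtain ⟨v, hv0, heig⟩ := statement17.commEigen S hcomm
  have eig : ∀ g : G, g ∈ H → ∃ c : Ω, (N g).mulVec v = c • v := by
    intro g hg
    exact heig (N (⟨g, hg⟩ : H)) ⟨⟨g, hg⟩, Set.mem_univ _, rfl⟩
  set w := (N σ).mulVec v with hwdef
  have hind : ¬ ∃ c : Ω, w = c • v := by
    rintro ⟨c, hc⟩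
    apply hirr v hv0
    intro g
    by_cases hg : g ∈ H
    · exact eig g hg
    · have hmem : σ⁻¹ * g ∈ H := by
        rw [Subgroup.mul_mem_iff_of_index_two hHidx]
        simp only [inv_mem_iff]
        exact iff_of_false hσ hg
      obtain ⟨c', hc'⟩ := eig _ hmem
      refine ⟨c' * c, ?_⟩
      have : N g = N σ * N (σ⁻¹ * g) := by rw [← hNmul, mul_inv_cancel_left]
      calc (N g).mulVec v = (N σ).mulVec ((N (σ⁻¹ * g)).mulVec v) := by
            rw [this, ← Matrix.mulVec_mulVec]
        _ = (N σ).mulVec (c' • v) := by rw [hc']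
        _ = c' • ((N σ).mulVec v) := by rw [Matrix.mulVec_smul]
        _ = c' • (c • v) := by rw [← hwdef, hc]
        _ = (c' * c) • v := by rw [smul_smul]
  have hσ2 : σ * σ ∈ H := Subgroup.mul_self_mem_of_index_two hHidx σ
  obtain ⟨c₂, hc₂⟩ := eig _ hσ2
  have hch := statement17.ch2 (N σ)
  have hkey : (N σ).trace • w = (c₂ + (N σ).det) • v := by
    have h1 : (N σ).mulVec w = c₂ • v := by
      rw [hwdef, Matrix.mulVec_mulVec, ← hNmul, hc₂]
    have h2 : (N σ).mulVec w = (N σ).trace • w - (N σ).det • v := by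
      rw [hwdef, Matrix.mulVec_mulVec, hch, Matrix.sub_mulVec,
        Matrix.smul_mulVec, Matrix.smul_mulVec, Matrix.one_mulVec]
    rw [h1] at h2
    have := h2.symm
    rw [sub_eq_iff_eq_add] at this
    rw [this, add_smul, add_comm]
  have hT : (N σ).trace = 0 := by
    by_contra hT
    apply hind
    refine ⟨((N σ).trace)⁻¹ * (c₂ + (N σ).det), ?_⟩
    have := congrArg (fun x => ((N σ).trace)⁻¹ • x) hkey
    simpa [smul_smul, inv_mul_cancel₀ hT] using this
  have htr : (N σ).trace = ψ ((ρbar σ : Matrix (Fin 2) (Fin 2) 𝔽).trace) := by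
    rw [hNdef]
    simp [Matrix.trace, Matrix.diag, map_sum]
  rw [htr] at hT
  exact (map_eq_zero ψ).1 hT

end Auxiliary

/-- Let `ρ̄ : G → GL₂(𝔽)` be absolutely irreducible over a (finite) field `𝔽` of
characteristic 2 with dihedral image, and let `H = G_L` be the (unique) index-2 subgroup of
`G` such that `ρ̄|_H` is abelian. Let `A` be a complete local domain of characteristic 2 and
`ρ : G → GL₂(A)` a deformation of `ρ̄` with finite-order determinant that is non-dihedral.
Then there exists `σ ∈ G \ H` such that `ρ(σ)` has infinite order. -/
theorem statement17 {G : Type*} [Group G] {𝔽 : Type*} [Field 𝔽] [Finite 𝔽] [CharP 𝔽 2]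
    (ρbar : G →* (Matrix (Fin 2) (Fin 2) 𝔽)ˣ)
    -- `ρ̄` is absolutely irreducible: no common eigenvector over `𝔽̄`
    (hirr : ∀ v : Fin 2 → AlgebraicClosure 𝔽, v ≠ 0 →
      ¬ ∀ g : G, ∃ c : AlgebraicClosure 𝔽,
        (((ρbar g : Matrix (Fin 2) (Fin 2) 𝔽)).map
            (algebraMap 𝔽 (AlgebraicClosure 𝔽))).mulVec v = c • v)
    -- `ρ̄` has dihedral image: `H` has index 2 and `ρ̄|_H` is abelian
    (H : Subgroup G) (hHidx : H.index = 2)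
    (hHab : ∀ g₁ ∈ H, ∀ g₂ ∈ H, ρbar g₁ * ρbar g₂ = ρbar g₂ * ρbar g₁)
    {A : Type*} [CommRing A] [IsDomain A] [IsLocalRing A] [IsNoetherianRing A]
    [IsAdicComplete (IsLocalRing.maximalIdeal A) A] [CharP A 2] [Algebra 𝔽 A]
    -- `𝔽` is the residue field of `A`
    (hres : Function.Bijective ((IsLocalRing.residue A).comp (algebraMap 𝔽 A)))
    (ρ : G →* (Matrix (Fin 2) (Fin 2) A)ˣ)
    -- `ρ` is a deformation of `ρ̄`: the reduction of `ρ` is `ρ̄`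
    (hlift : ∀ g : G,
      ((ρ g : Matrix (Fin 2) (Fin 2) A)).map (IsLocalRing.residue A)
        = ((ρbar g : Matrix (Fin 2) (Fin 2) 𝔽)).map fun a =>
            IsLocalRing.residue A (algebraMap 𝔽 A a))
    -- `det ρ` has finite order
    (hdet : ∃ n : ℕ, 0 < n ∧ ∀ g : G, ((ρ g : Matrix (Fin 2) (Fin 2) A).det) ^ n = 1)
    -- `ρ` is non-dihedral: not induced from (equivalently, not reducible over the algebraic
    -- closure of the fraction field on) any index-2 subgroup
    (hnd : ¬ ∃ N : Subgroup G, N.index = 2 ∧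
      ∃ v : Fin 2 → AlgebraicClosure (FractionRing A), v ≠ 0 ∧
        ∀ g ∈ N, ∃ c : AlgebraicClosure (FractionRing A),
          (((ρ g : Matrix (Fin 2) (Fin 2) A)).map
              (algebraMap A (AlgebraicClosure (FractionRing A)))).mulVec v = c • v) :
    ∃ σ : G, σ ∉ H ∧ ∀ k : ℕ, 0 < k → (ρ σ) ^ k ≠ 1 := by
  by_contra hcon
  push_neg at hcon
  -- so every element outside H has finite order under ρ
  have hfin : ∀ y : G, y ∉ H → ∃ k : ℕ, 0 < k ∧ (ρ y) ^ k = 1 := by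
    intro y hy
    obtain ⟨k, hk, hky⟩ := hcon y hy
    exact ⟨k, hk, hky⟩
  -- Step A: traces vanish off H
  have traceA : ∀ y : G, y ∉ H → ((ρ y : Matrix (Fin 2) (Fin 2) A)).trace = 0 := by
    intro y hy
    obtain ⟨k, hk, hky⟩ := hfin y hy
    apply statement17.traceZero (ρ y) k hk hky
    have h2 := statement17.traceBar ρbar hirr H hHidx hHab hy
    have h0 : IsLocalRing.residue A ((ρ y : Matrix (Fin 2) (Fin 2) A)).trace = 0 := by
      have h1 : (((ρ y : Matrix (Fin 2) (Fin 2) A)).map (IsLocalRing.residue A)).trace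
          = IsLocalRing.residue A ((ρ y : Matrix (Fin 2) (Fin 2) A)).trace := by
        simp [Matrix.trace, Matrix.diag, Matrix.map_apply, map_sum]
      rw [hlift y] at h1
      rw [← h1, Matrix.trace_fin_two, Matrix.map_apply, Matrix.map_apply, ← map_add, ← map_add,
        ← Matrix.trace_fin_two, h2, map_zero, map_zero]
    exact (Ideal.Quotient.eq_zero_iff_mem).1 h0
  -- Step B: squares of elements outside H are scalar
  have hsq : ∀ y : G, y ∉ H →
      (ρ y : Matrix (Fin 2) (Fin 2) A) * (ρ y : Matrix (Fin 2) (Fin 2) A)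
        = ((ρ y : Matrix (Fin 2) (Fin 2) A)).det • 1 := by
    intro y hy
    rw [statement17.ch2, traceA y hy, zero_smul, zero_sub, ← neg_smul, CharTwo.neg_eq]
  -- Step C: the image of H under ρ is commutative
  obtain ⟨σ₀, hσ₀⟩ : ∃ σ₀ : G, σ₀ ∉ H := by
    by_contra h
    push_neg at h
    have : H = ⊤ := Subgroup.eq_top_iff' H |>.2 h
    rw [this, Subgroup.index_top] at hHidx
    omega
  have hcoset : ∀ h : G, h ∈ H → σ₀ * h ∉ H := by
    intro h hh hm
    have := (Subgroup.mul_mem_iff_of_index_two hHidx).1 hm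
    exact hσ₀ (this.2 hh)
  have hcomm : ∀ h₁ ∈ H, ∀ h₂ ∈ H, ρ h₁ * ρ h₂ = ρ h₂ * ρ h₁ := by
    intro h₁ hh₁ h₂ hh₂
    set u : Matrix (Fin 2) (Fin 2) A := (ρ σ₀ : Matrix (Fin 2) (Fin 2) A) with hu
    set X₁ : Matrix (Fin 2) (Fin 2) A := (ρ h₁ : Matrix (Fin 2) (Fin 2) A) with hX₁
    set X₂ : Matrix (Fin 2) (Fin 2) A := (ρ h₂ : Matrix (Fin 2) (Fin 2) A) with hX₂
    set Y₁ : Matrix (Fin 2) (Fin 2) A :=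
      (((ρ h₁)⁻¹ : (Matrix (Fin 2) (Fin 2) A)ˣ) : Matrix (Fin 2) (Fin 2) A) with hY₁
    set Y₂ : Matrix (Fin 2) (Fin 2) A :=
      (((ρ h₂)⁻¹ : (Matrix (Fin 2) (Fin 2) A)ˣ) : Matrix (Fin 2) (Fin 2) A) with hY₂
    have hXY₁ : X₁ * Y₁ = 1 := by rw [hX₁, hY₁, ← Units.val_mul, mul_inv_cancel, Units.val_one]
    have hXY₂ : X₂ * Y₂ = 1 := by rw [hX₂, hY₂, ← Units.val_mul, mul_inv_cancel, Units.val_one]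
    set δ₀ : A := u.det with hδ₀
    set δ₁ : A := (u * X₁).det with hδ₁
    set δ₂ : A := (u * X₂).det with hδ₂
    set δ₁₂ : A := (u * (X₁ * X₂)).det with hδ₁₂
    have hval : ∀ h : G, h ∈ H → (ρ (σ₀ * h) : Matrix (Fin 2) (Fin 2) A)
        = u * (ρ h : Matrix (Fin 2) (Fin 2) A) := by
      intro h hh
      rw [map_mul, Units.val_mul, hu]
    -- scalar-square identities
    have S0 : u * u = δ₀ • 1 := by rw [hδ₀, hu]; exact hsq σ₀ hσ₀
    have S1 : (u * X₁) * (u * X₁) = δ₁ • 1 := by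
      have := hsq (σ₀ * h₁) (hcoset h₁ hh₁)
      rwa [hval h₁ hh₁, ← hX₁, ← hδ₁] at this
    have S2 : (u * X₂) * (u * X₂) = δ₂ • 1 := by
      have := hsq (σ₀ * h₂) (hcoset h₂ hh₂)
      rwa [hval h₂ hh₂, ← hX₂, ← hδ₂] at this
    have S12 : (u * (X₁ * X₂)) * (u * (X₁ * X₂)) = δ₁₂ • 1 := by
      have := hsq (σ₀ * (h₁ * h₂)) (hcoset (h₁ * h₂) (H.mul_mem hh₁ hh₂))
      rwa [hval (h₁ * h₂) (H.mul_mem hh₁ hh₂), map_mul, Units.val_mul, ← hX₁, ← hX₂,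
        ← hδ₁₂] at this
    -- conjugation-inversion identities
    have K1 : u * X₁ * u = δ₁ • Y₁ := by
      have e1 : (u * X₁) * (u * X₁) * Y₁ = u * X₁ * u * (X₁ * Y₁) := by noncomm_ring
      rw [hXY₁, mul_one] at e1
      rw [← e1, S1, Matrix.smul_mul, one_mul]
    have K2 : u * X₂ * u = δ₂ • Y₂ := by
      have e1 : (u * X₂) * (u * X₂) * Y₂ = u * X₂ * u * (X₂ * Y₂) := by noncomm_ring
      rw [hXY₂, mul_one] at e1
      rw [← e1, S2, Matrix.smul_mul, one_mul]
    have hXY12 : (X₁ * X₂) * (Y₂ * Y₁) = 1 := by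
      rw [show (X₁ * X₂) * (Y₂ * Y₁) = X₁ * (X₂ * Y₂) * Y₁ from by noncomm_ring, hXY₂,
        mul_one, hXY₁]
    have K12 : u * (X₁ * X₂) * u = δ₁₂ • (Y₂ * Y₁) := by
      have e1 : (u * (X₁ * X₂)) * (u * (X₁ * X₂)) * (Y₂ * Y₁)
          = u * (X₁ * X₂) * u * ((X₁ * X₂) * (Y₂ * Y₁)) := by noncomm_ring
      rw [hXY12, mul_one] at e1
      rw [← e1, S12, Matrix.smul_mul, one_mul]
    -- main scalar relation
    have main : (δ₀ * δ₁₂) • (Y₂ * Y₁) = (δ₁ * δ₂) • (Y₁ * Y₂) := by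
      have e2 : u * X₁ * (u * u) * (X₂ * u) = (u * X₁ * u) * (u * X₂ * u) := by noncomm_ring
      rw [S0, K1, K2] at e2
      have e3 : u * X₁ * (δ₀ • (1 : Matrix (Fin 2) (Fin 2) A)) * (X₂ * u)
          = δ₀ • (u * (X₁ * X₂) * u) := by
        rw [Matrix.mul_smul, Matrix.smul_mul, mul_one]
        congr 1
        noncomm_ring
      rw [e3, K12] at e2
      rw [smul_smul] at e2
      rw [e2]
      rw [Matrix.smul_mul, Matrix.mul_smul, smul_smul]
    -- compare determinants to see the two scalars agree
    have hdetY : (Y₁.det * Y₂.det) ≠ 0 := by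
      intro h
      have h1 : X₁.det * Y₁.det * (X₂.det * Y₂.det) = 1 := by
        rw [← Matrix.det_mul, ← Matrix.det_mul, hXY₁, hXY₂, Matrix.det_one, mul_one]
      have : X₁.det * X₂.det * (Y₁.det * Y₂.det) = 1 := by rw [← h1]; ring
      rw [h, mul_zero] at this
      exact zero_ne_one this
    have hdets : (δ₀ * δ₁₂) ^ 2 * (Y₁.det * Y₂.det) = (δ₁ * δ₂) ^ 2 * (Y₁.det * Y₂.det) := by
      have := congrArg Matrix.det main
      rw [Matrix.det_smul, Matrix.det_smul, Matrix.det_mul, Matrix.det_mul] at this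
      simpa [Fintype.card_fin, mul_comm, mul_left_comm, mul_assoc] using this
    have hsq2 : (δ₀ * δ₁₂) ^ 2 = (δ₁ * δ₂) ^ 2 := mul_right_cancel₀ hdetY hdets
    have hscal : δ₀ * δ₁₂ = δ₁ * δ₂ := by
      have h2 : (2 : A) = 0 := by
        have := CharP.cast_eq_zero A 2
        simpa using this
      have : (δ₀ * δ₁₂ - δ₁ * δ₂) ^ 2 = 0 := by
        linear_combination hsq2 + ((δ₁ * δ₂) * (δ₁ * δ₂) - (δ₀ * δ₁₂) * (δ₁ * δ₂)) * h2
      have := pow_eq_zero_iff (n := 2) (by norm_num) |>.1 this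
      exact sub_eq_zero.1 this
    have hα : δ₀ * δ₁₂ ≠ 0 := by
      intro h
      have h1 : u.det * u.det = δ₀ ^ 2 := by rw [hδ₀]; ring
      have hu1 : u * ((ρ σ₀)⁻¹ : (Matrix (Fin 2) (Fin 2) A)ˣ) = 1 := by
        rw [hu, ← Units.val_mul, mul_inv_cancel, Units.val_one]
      have hu0 : u.det ≠ 0 := by
        intro h0
        have := congrArg Matrix.det hu1
        rw [Matrix.det_mul, h0, zero_mul, Matrix.det_one] at this
        exact zero_ne_one this
      have h12 : (u * (X₁ * X₂)).det ≠ 0 := by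
        have hv := hval (h₁ * h₂) (H.mul_mem hh₁ hh₂)
        have hu1' : (ρ (σ₀ * (h₁ * h₂)) : Matrix (Fin 2) (Fin 2) A)
            * ((ρ (σ₀ * (h₁ * h₂)))⁻¹ : (Matrix (Fin 2) (Fin 2) A)ˣ) = 1 := by
          rw [← Units.val_mul, mul_inv_cancel, Units.val_one]
        intro h0
        rw [hv, map_mul, Units.val_mul, ← hX₁, ← hX₂] at hu1'
        have := congrArg Matrix.det hu1'
        rw [Matrix.det_mul, h0, zero_mul, Matrix.det_one] at this
        exact zero_ne_one this
      rcases mul_eq_zero.1 h with h' | h'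
      · exact hu0 (by rwa [hδ₀] at h')
      · exact h12 (by rwa [hδ₁₂] at h')
    have hYY : Y₂ * Y₁ = Y₁ * Y₂ := by
      rw [hscal] at main
      ext i j
      have := congrFun (congrFun main i) j
      simp only [Matrix.smul_apply, smul_eq_mul] at this
      have hβ : δ₁ * δ₂ ≠ 0 := by rwa [hscal] at hα
      exact mul_left_cancel₀ hβ this
    -- transfer back to the units
    have hYYu : (ρ h₂)⁻¹ * (ρ h₁)⁻¹ = (ρ h₁)⁻¹ * (ρ h₂)⁻¹ := by
      apply Units.ext
      rw [Units.val_mul, Units.val_mul]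
      exact hYY
    have := congrArg (fun z => z⁻¹) hYYu
    simpa [mul_inv_rev] using this
  -- Step D: contradiction with non-dihedralness
  apply hnd
  refine ⟨H, hHidx, ?_⟩
  set K := AlgebraicClosure (FractionRing A)
  set φ : A →+* K := algebraMap A K with hφdef
  set S : Set (Matrix (Fin 2) (Fin 2) K) :=
    Set.range (fun h : H => ((ρ (h : G) : Matrix (Fin 2) (Fin 2) A)).map φ) with hSdef
  have hScomm : ∀ M ∈ S, ∀ M' ∈ S, M * M' = M' * M := by
    rintro _ ⟨h₁, rfl⟩ _ ⟨h₂, rfl⟩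
    simp only
    rw [← Matrix.map_mul, ← Matrix.map_mul]
    have := hcomm h₁ h₁.2 h₂ h₂.2
    have hXX : (ρ (h₁ : G) : Matrix (Fin 2) (Fin 2) A) * (ρ (h₂ : G) : Matrix (Fin 2) (Fin 2) A)
        = (ρ (h₂ : G) : Matrix (Fin 2) (Fin 2) A) * (ρ (h₁ : G) : Matrix (Fin 2) (Fin 2) A) := by
      rw [← Units.val_mul, this, Units.val_mul]
    rw [hXX]
  obtain ⟨v, hv0, heig⟩ := statement17.commEigen S hScomm
  exact ⟨v, hv0, fun g hg => heig _ ⟨⟨g, hg⟩, rfl⟩⟩
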